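/- Let H be a complex Hilbert space and U a unitary bounded operator on H with spectral gap at -1, i.e. there exists δ > 0 such that every element z of the spectrum of U with z ≠ -1 satisfies ‖z + 1‖ ≥ δ. Let P be the orthogonal projection of H onto ker(U + 1). Then there exists a unique bounded linear operator B on H satisfying B ∘ P = 0, (U + 1) ∘ B = id - P, and B ∘ (U + 1) = id - P. -/

import Mathlib

/-- Let `H` be a complex Hilbert space and `U` a unitary bounded operator on `H` with
spectral gap at `-1`. Let `P` be the orthogonal projection onto `ker (U + 1)`.
Then there is a unique bounded operator `B` with `B ∘ P = 0`,
`(U + 1) ∘ B = 1 - P` and `B ∘ (U + 1) = 1 - P`. -/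
theorem existsUnique_pseudoinverse_of_spectral_gap
    {H : Type*} [NormedAddCommGroup H] [InnerProductSpace ℂ H] [CompleteSpace H]
    (U P : H →L[ℂ] H)
    (hU₁ : ContinuousLinearMap.adjoint U ∘L U = 1)
    (hU₂ : U ∘L ContinuousLinearMap.adjoint U = 1)
    (δ : ℝ) (hδ : 0 < δ)
    (hgap : ∀ z ∈ spectrum ℂ U, z ≠ -1 → δ ≤ ‖z + 1‖)
    (hP : ∀ x : H, P x ∈ LinearMap.ker ((U + 1 : H →L[ℂ] H) : H →ₗ[ℂ] H) ∧ x - P x ∈ (LinearMap.ker ((U + 1 : H →L[ℂ] H) : H →ₗ[ℂ] H))ᗮ) :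
    ∃! B : H →L[ℂ] H,
      B ∘L P = 0 ∧ (U + 1) ∘L B = 1 - P ∧ B ∘L (U + 1) = 1 - P := by
  have hnormal : IsStarNormal U := by
    constructor
    rw [Commute, SemiconjBy, ContinuousLinearMap.star_eq_adjoint,
      ContinuousLinearMap.mul_def, ContinuousLinearMap.mul_def, hU₁, hU₂]
  set c : ℝ := δ ^ 2 / 4 with hc_def
  have hc : 0 < c := by positivity
  set f : ℂ → ℂ := fun z => (starRingEnd ℂ) (z + 1) * ((max (‖z + 1‖ ^ 2) c : ℝ) : ℂ)⁻¹
    with hf_def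
  have hf_cont : Continuous f := by
    apply Continuous.mul
    · exact Continuous.comp continuous_star (by fun_prop)
    · apply Continuous.inv₀
      · fun_prop
      · intro z
        simp only [ne_eq, Complex.ofReal_eq_zero]
        have : c ≤ max (‖z + 1‖ ^ 2) c := le_max_right _ _
        nlinarith
  -- key pointwise fact on the spectrum
  have hkey : ∀ z ∈ spectrum ℂ U, z ≠ -1 → (z + 1) * f z = 1 := by
    intro z hz hz1
    have hδz : δ ≤ ‖z + 1‖ := hgap z hz hz1
    have hmax : max (‖z + 1‖ ^ 2) c = ‖z + 1‖ ^ 2 := by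
      apply max_eq_left
      nlinarith
    have hne : z + 1 ≠ 0 := by
      intro h
      exact hz1 (by linear_combination h)
    have h0 : (0:ℝ) < ‖z + 1‖ := lt_of_lt_of_le hδ hδz
    have hnorm_ne : ((‖z + 1‖ ^ 2 : ℝ) : ℂ) ≠ 0 := by
      simp only [ne_eq, Complex.ofReal_eq_zero]
      positivity
    rw [hf_def]
    simp only [hmax]
    rw [← mul_assoc, Complex.mul_conj']
    rw [← Complex.ofReal_pow]
    exact mul_inv_cancel₀ hnorm_ne
  have hf_neg1 : f (-1) = 0 := by
    rw [hf_def]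
    simp
  -- cfc of (z+1) is U + 1
  have hcfc_add1 : cfc (fun z : ℂ => z + 1) U = U + 1 := by
    rw [cfc_add (a := U) (fun z : ℂ => z) (fun _ => (1:ℂ)), cfc_id' ℂ U, cfc_const 1 U]
    simp
  set B : H →L[ℂ] H := cfc f U with hB_def
  -- operator identities from cfc
  have hAB : (U + 1) * B = cfc (fun z => (z + 1) * f z) U := by
    rw [cfc_mul _ _ U (by fun_prop) hf_cont.continuousOn, hcfc_add1]
  have hBA : B * (U + 1) = (U + 1) * B := by
    rw [hAB, hB_def, ← hcfc_add1,
      ← cfc_mul _ _ U hf_cont.continuousOn (by fun_prop)]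
    exact cfc_congr fun z _ => mul_comm _ _
  have hAAB : (U + 1) * ((U + 1) * B) = U + 1 := by
    rw [hAB, ← hcfc_add1, ← cfc_mul _ _ U (by fun_prop)
      (Continuous.continuousOn (by fun_prop : Continuous fun z : ℂ => (z + 1) * f z))]
    apply cfc_congr
    intro z hz
    show (z + 1) * ((z + 1) * f z) = z + 1
    by_cases h1 : z = -1
    · subst h1; simp
    · rw [hkey z hz h1, mul_one]
  have hBAB : B * ((U + 1) * B) = B := by
    rw [hAB, hB_def, ← cfc_mul _ _ U hf_cont.continuousOn
      (Continuous.continuousOn (by fun_prop : Continuous fun z : ℂ => (z + 1) * f z))]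
    apply cfc_congr
    intro z hz
    show f z * ((z + 1) * f z) = f z
    by_cases h1 : z = -1
    · subst h1; simp [hf_neg1]
    · rw [hkey z hz h1, mul_one]
  -- the candidate projection
  set Q : H →L[ℂ] H := 1 - (U + 1) * B with hQ_def
  have hAQ : (U + 1) * Q = 0 := by
    rw [hQ_def, mul_sub, mul_one, hAAB, sub_self]

  have hBQ : B * Q = 0 := by
    rw [hQ_def, mul_sub, mul_one, hBAB, sub_self]
  -- adjoint kills the kernel
  have hker_adj : ∀ k : H, (U + 1) k = 0 → (ContinuousLinearMap.adjoint (U + 1)) k = 0 := by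
    intro k hk
    have hUk : U k = -k := by
      have := hk
      simp only [ContinuousLinearMap.add_apply, ContinuousLinearMap.one_apply] at this
      exact eq_neg_of_add_eq_zero_left this
    have hadj : ContinuousLinearMap.adjoint (U + 1) =
        ContinuousLinearMap.adjoint U + 1 := by
      rw [map_add]
      congr 1
      rw [← ContinuousLinearMap.star_eq_adjoint]
      exact star_one _
    rw [hadj]
    have hUstark : ContinuousLinearMap.adjoint U k = -k := by
      have h1 : ContinuousLinearMap.adjoint U (U k) = k := by
        have := congrArg (fun T : H →L[ℂ] H => T k) hU₁
        simpa using this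
      rw [hUk, map_neg] at h1
      exact neg_eq_iff_eq_neg.mp h1
    simp [hUstark]
  -- Q x is in the kernel
  have hQker : ∀ x : H, Q x ∈ LinearMap.ker ((U + 1 : H →L[ℂ] H) : H →ₗ[ℂ] H) := by
    intro x
    rw [LinearMap.mem_ker]
    have := congrArg (fun T : H →L[ℂ] H => T x) hAQ
    simpa [ContinuousLinearMap.mul_apply] using this
  -- x - Q x is in the orthogonal complement
  have hQorth : ∀ x : H, x - Q x ∈ (LinearMap.ker ((U + 1 : H →L[ℂ] H) : H →ₗ[ℂ] H))ᗮ := by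
    intro x
    rw [Submodule.mem_orthogonal]
    intro k hk
    rw [LinearMap.mem_ker] at hk
    have hxQ : x - Q x = (U + 1) (B x) := by
      simp [hQ_def, ContinuousLinearMap.mul_apply]
    rw [hxQ, ← ContinuousLinearMap.adjoint_inner_left, hker_adj k hk,
      inner_zero_left]
  -- P = Q
  have hPQ : P = Q := by
    ext x
    have hdK : P x - Q x ∈ LinearMap.ker ((U + 1 : H →L[ℂ] H) : H →ₗ[ℂ] H) :=
      Submodule.sub_mem _ (hP x).1 (hQker x)
    have hdO : P x - Q x ∈ (LinearMap.ker ((U + 1 : H →L[ℂ] H) : H →ₗ[ℂ] H))ᗮ := by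
      have : P x - Q x = (x - Q x) - (x - P x) := by abel
      rw [this]
      exact Submodule.sub_mem _ (hQorth x) (hP x).2
    have : P x - Q x = 0 := by
      have h := (Submodule.mem_orthogonal _ _).mp hdO _ hdK
      rwa [inner_self_eq_zero] at h
    have := sub_eq_zero.mp this
    simpa using this
  -- the three properties for B
  have hprop1 : B ∘L P = 0 := by
    rw [hPQ, ← ContinuousLinearMap.mul_def, hBQ]
  have hprop2 : (U + 1) ∘L B = 1 - P := by
    rw [hPQ, ← ContinuousLinearMap.mul_def, hQ_def, sub_sub_cancel]
  have hprop3 : B ∘L (U + 1) = 1 - P := by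
    rw [hPQ, ← ContinuousLinearMap.mul_def, hBA, hQ_def, sub_sub_cancel]
  -- any solution equals (1 - P) * B
  have huniq : ∀ C : H →L[ℂ] H,
      (C ∘L P = 0 ∧ (U + 1) ∘L C = 1 - P ∧ C ∘L (U + 1) = 1 - P) → C = (1 - P) * B := by
    intro C ⟨h1, h2, h3⟩
    rw [← ContinuousLinearMap.mul_def] at h1 h2 h3
    have : C * (1 - P) = C := by
      rw [mul_sub, mul_one, h1, sub_zero]
    calc C = C * (1 - P) := this.symm
      _ = C * ((U + 1) * B) := by rw [← ContinuousLinearMap.mul_def] at hprop2; rw [hprop2]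
      _ = (C * (U + 1)) * B := (mul_assoc _ _ _).symm
      _ = (1 - P) * B := by rw [h3]
  refine ⟨B, ⟨hprop1, hprop2, hprop3⟩, fun C hC => ?_⟩
  rw [huniq C hC]
  exact (huniq B ⟨hprop1, hprop2, hprop3⟩).symm
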